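/- Let κ be a regular uncountable cardinal and give the ordinal space κ+1 (the set of ordinals ≤ κ) the order topology. Then Nt(κ+1) = κ^+; that is, κ+1 has a (κ^+)^op-like base but no κ^op-like base. -/

import Mathlib

open Cardinal Set TopologicalSpace

universe u

/-- A family `B` of subsets of a space is `κ`-op-like if every member of `B`
has fewer than `κ`-many supersets in `B`. -/
def OpLike {X : Type u} (κ : Cardinal.{u}) (B : Set (Set X)) : Prop :=
  ∀ U ∈ B, #{V ∈ B | U ⊆ V} < κ

/-- The Noetherian type of a space: the least infinite `κ` such that the space
has a `κ`-op-like base. -/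
noncomputable def NoetherianType (X : Type u) [TopologicalSpace X] : Cardinal.{u} :=
  sInf {κ : Cardinal.{u} | ℵ₀ ≤ κ ∧ ∃ B : Set (Set X), IsTopologicalBasis B ∧ OpLike κ B}

/-- The weight of a space: the least infinite `κ` such that the space has
a base of cardinality at most `κ`. -/
noncomputable def Weight (X : Type u) [TopologicalSpace X] : Cardinal.{u} :=
  sInf {κ : Cardinal.{u} | ℵ₀ ≤ κ ∧ ∃ B : Set (Set X), IsTopologicalBasis B ∧ #B ≤ κ}

/-- A π-base: a family of nonempty open sets such that every nonempty open set
contains a member of the family. -/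
def IsPiBase {X : Type u} [TopologicalSpace X] (B : Set (Set X)) : Prop :=
  (∀ U ∈ B, IsOpen U ∧ U.Nonempty) ∧
    ∀ U : Set X, IsOpen U → U.Nonempty → ∃ V ∈ B, V ⊆ U

/-- The π-weight of a space: the least infinite `κ` such that the space has
a π-base of cardinality at most `κ`. -/
noncomputable def PiWeight (X : Type u) [TopologicalSpace X] : Cardinal.{u} :=
  sInf {κ : Cardinal.{u} | ℵ₀ ≤ κ ∧ ∃ B : Set (Set X), IsPiBase B ∧ #B ≤ κ}

/-- The density of a space: the least infinite `κ` such that the space has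
a dense subset of cardinality at most `κ`. -/
noncomputable def Density (X : Type u) [TopologicalSpace X] : Cardinal.{u} :=
  sInf {κ : Cardinal.{u} | ℵ₀ ≤ κ ∧ ∃ D : Set X, Dense D ∧ #D ≤ κ}

/-- A GO-space: a linearly ordered set whose topology is induced by an order
embedding into some linearly ordered topological space (a linear order with
its order topology). -/
def IsGOSpace (X : Type u) [LinearOrder X] [tX : TopologicalSpace X] : Prop :=
  ∃ (Y : Type u) (lo : LinearOrder Y) (e : X → Y),
    @StrictMono X Y _ lo.toPartialOrder.toPreorder e ∧
    tX = TopologicalSpace.induced e (@Preorder.topology Y lo.toPartialOrder.toPreorder)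

/-- A space is `μ`-compact if every open cover has a subcover of cardinality
less than `μ`. -/
def MuCompact (μ : Cardinal.{u}) (X : Type u) [TopologicalSpace X] : Prop :=
  ∀ 𝒰 : Set (Set X), (∀ U ∈ 𝒰, IsOpen U) → ⋃₀ 𝒰 = Set.univ →
    ∃ 𝒱 ⊆ 𝒰, #𝒱 < μ ∧ ⋃₀ 𝒱 = Set.univ

/-- A cardinal is weakly inaccessible if it is uncountable, regular, and
a limit cardinal. -/
def IsWeaklyInaccessible (κ : Cardinal.{u}) : Prop :=
  ℵ₀ < κ ∧ κ.IsRegular ∧ ∀ μ < κ, Order.succ μ < κ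

/-- The ordinal space `κ + 1`: the linear order of all ordinals `≤ κ`,
realized as the order type `κ.ord + 1`, with its order topology. -/
noncomputable instance (o : Ordinal.{u}) : TopologicalSpace o.ToType :=
  Preorder.topology o.ToType

instance (o : Ordinal.{u}) : OrderTopology o.ToType := ⟨rfl⟩

open Order in
private theorem basisSmall (X : Type u) [LinearOrder X] [TopologicalSpace X] [OrderTopology X]
    [Infinite X] : ∃ B : Set (Set X), IsTopologicalBasis B ∧ #B ≤ #X := by
  classical
  set r : Set (Set X) := range (Ioi : X → Set X) ∪ range (Iio : X → Set X) ∪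
    range (fun p : X × X => Ioi p.1 ∩ Iio p.2) with hr
  have hsi : ∀ ⦃s⦄, s ∈ r → ∀ ⦃t⦄, t ∈ r → s ∩ t ∈ r := by
    rintro s (⟨⟨a, rfl⟩ | ⟨a, rfl⟩⟩ | ⟨⟨a, b⟩, rfl⟩) t (⟨⟨c, rfl⟩ | ⟨c, rfl⟩⟩ | ⟨⟨c, d⟩, rfl⟩)
    · exact Or.inl <| Or.inl ⟨a ⊔ c, by ext x; simp [sup_lt_iff, and_comm]⟩
    · exact Or.inr ⟨(a, c), rfl⟩
    · exact Or.inr ⟨(a ⊔ c, d), by ext x; simp [sup_lt_iff]; tauto⟩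
    · exact Or.inr ⟨(c, a), by ext x; simp [and_comm]⟩
    · exact Or.inl <| Or.inr ⟨a ⊓ c, by ext x; simp [lt_inf_iff, and_comm]⟩
    · exact Or.inr ⟨(c, a ⊓ d), by ext x; simp [lt_inf_iff]; tauto⟩
    · exact Or.inr ⟨(a ⊔ c, b), by ext x; simp [sup_lt_iff]; tauto⟩
    · exact Or.inr ⟨(a, b ⊓ c), by ext x; simp [lt_inf_iff]; tauto⟩
    · exact Or.inr ⟨(a ⊔ c, b ⊓ d), by ext x; simp [sup_lt_iff, lt_inf_iff]; tauto⟩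
  have hgen : ‹TopologicalSpace X› = generateFrom r := by
    refine le_antisymm ?_ ?_
    · rw [OrderTopology.topology_eq_generate_intervals (α := X)]
      refine le_generateFrom ?_
      rintro s (⟨⟨a, rfl⟩ | ⟨a, rfl⟩⟩ | ⟨⟨a, b⟩, rfl⟩)
      · exact GenerateOpen.basic _ ⟨a, Or.inl rfl⟩
      · exact GenerateOpen.basic _ ⟨a, Or.inr rfl⟩
      · exact GenerateOpen.inter _ _ (GenerateOpen.basic _ ⟨a, Or.inl rfl⟩)
          (GenerateOpen.basic _ ⟨b, Or.inr rfl⟩)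
    · rw [OrderTopology.topology_eq_generate_intervals (α := X)]
      refine le_generateFrom ?_
      rintro s ⟨a, rfl | rfl⟩
      · exact GenerateOpen.basic _ (Or.inl (Or.inl ⟨a, rfl⟩))
      · exact GenerateOpen.basic _ (Or.inl (Or.inr ⟨a, rfl⟩))
  refine ⟨insert Set.univ r, isTopologicalBasis_of_subbasis_of_inter hgen hsi, ?_⟩
  have h0 : ℵ₀ ≤ #X := aleph0_le_mk X
  have h1 : #r ≤ #X := by
    refine le_trans (mk_union_le _ _) ?_
    refine le_trans (add_le_add (mk_union_le _ _) le_rfl) ?_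
    have e1 : #(range (Ioi : X → Set X)) ≤ #X := mk_range_le
    have e2 : #(range (Iio : X → Set X)) ≤ #X := mk_range_le
    have e3 : #(range (fun p : X × X => Ioi p.1 ∩ Iio p.2)) ≤ #X := by
      refine le_trans mk_range_le ?_
      have : #(X × X) = #X * #X := by simp
      rw [this, mul_eq_self h0]
    calc #(range (Ioi : X → Set X)) + #(range (Iio : X → Set X)) +
        #(range (fun p : X × X => Ioi p.1 ∩ Iio p.2)) ≤ #X + #X + #X := by
          gcongr
      _ = #X := by rw [add_eq_self h0, add_eq_self h0]
  refine le_trans (mk_insert_le) ?_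
  calc #r + 1 ≤ #X + #X := by
        gcongr
        exact le_trans one_le_aleph0 h0
    _ = #X := add_eq_self h0

private theorem noOplike (κ : Cardinal.{u}) (hreg : κ.IsRegular) (hunc : ℵ₀ < κ)
    (o : Ordinal.{u}) (ho : o = Order.succ κ.ord)
    (B : Set (Set o.ToType)) (hB : IsTopologicalBasis B)
    (hop : ∀ U ∈ B, #{V ∈ B | U ⊆ V} < κ) : False := by
  classical
  have hLlim : Order.IsSuccLimit κ.ord := Cardinal.isSuccLimit_ord hreg.aleph0_le
  have hLo : κ.ord < o := ho ▸ Order.lt_succ _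
  set e : Set.Iio o ≃o o.ToType := Ordinal.ToType.mk with he
  set ι : o.ToType → Ordinal.{u} := fun x => ((e.symm x : Set.Iio o) : Ordinal) with hι
  have hιlt : ∀ x, ι x < o := fun x => (e.symm x).2
  have hιle : ∀ x y : o.ToType, x ≤ y ↔ ι x ≤ ι y := by
    intro x y
    rw [← e.symm.le_iff_le]
    rfl
  have hιmono : ∀ x y : o.ToType, x < y ↔ ι x < ι y := by
    intro x y
    rw [← e.symm.lt_iff_lt]
    rfl
  have hιinj : Function.Injective ι := by
    intro x y hxy
    exact le_antisymm ((hιle x y).2 hxy.le) ((hιle y x).2 hxy.ge)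
  set pt : Ordinal.{u} → o.ToType := fun β => if h : β < o then e ⟨β, h⟩ else e ⟨0, hLlim.pos.trans hLo⟩
    with hpt
  have hptι : ∀ {β}, β < o → ι (pt β) = β := by
    intro β h
    simp only [hpt, dif_pos h, hι]
    rw [e.symm_apply_apply]
  -- Step 1: choose basis elements at limit points
  have key : ∀ α : Ordinal.{u}, Order.IsSuccLimit α → α < κ.ord →
      ∃ U ∈ B, ∃ γ, γ < α ∧ (∀ y : o.ToType, y ∈ U → ι y ≤ α) ∧
        (∀ y : o.ToType, γ < ι y → ι y ≤ α → y ∈ U) := by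
    intro α hαlim hαL
    have hαo : α < o := hαL.trans hLo
    have hsucco : Order.succ α < o := (hLlim.succ_lt hαL).trans hLo
    have hIic : Iic (pt α) = Iio (pt (Order.succ α)) := by
      ext y
      simp only [mem_Iic, mem_Iio, hιle y (pt α), hιmono y (pt (Order.succ α)), hptι hαo,
        hptι hsucco, Order.lt_succ_iff]
    have hIicOpen : IsOpen (Iic (pt α)) := hIic ▸ isOpen_Iio
    obtain ⟨U, hUB, hxU, hUsub⟩ := hB.exists_subset_of_mem_open (mem_Iic.2 le_rfl) hIicOpen
    have hUnhds : U ∈ nhds (pt α) := (hB.isOpen hUB).mem_nhds hxU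
    have hbelow : ∃ l, l < pt α := by
      refine ⟨pt 0, ?_⟩
      rw [hιmono, hptι (hLlim.pos.trans hLo), hptι hαo]
      exact hαlim.pos
    obtain ⟨l, hl, hIoc⟩ := exists_Ioc_subset_of_mem_nhds hUnhds hbelow
    refine ⟨U, hUB, ι l, ?_, ?_, ?_⟩
    · rw [← hptι hαo]; exact (hιmono l (pt α)).1 hl
    · intro y hy
      have := hUsub hy
      rw [mem_Iic, hιle y (pt α), hptι hαo] at this
      exact this
    · intro y h1 h2
      apply hIoc
      constructor
      · exact (hιmono l y).2 h1
      · rw [hιle y (pt α), hptι hαo]; exact h2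
  choose! U hUB g hglt hUsub hUmem using key
  -- Step 2: weak Fodor: g is bounded on an unbounded set of limit ordinals
  have fodor : ∃ γ, γ < κ.ord ∧ ∀ β, β < κ.ord → ∃ α, Order.IsSuccLimit α ∧ α < κ.ord ∧ β ≤ α ∧ g α ≤ γ := by
    by_contra hcon
    push_neg at hcon
    choose! H hHlt hHprop using hcon
    set c : ℕ → Ordinal.{u} := fun n => Nat.rec 0 (fun _ p => max (H p) p + 1) n with hc
    have hcsucc : ∀ n, c (n + 1) = max (H (c n)) (c n) + 1 := fun n => rfl
    have hclt : ∀ n, c n < κ.ord := by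
      intro n
      induction n with
      | zero => exact hLlim.pos
      | succ n ih =>
        rw [hcsucc, Ordinal.add_one_eq_succ]
        exact hLlim.succ_lt (max_lt (hHlt _ ih) ih)
    have hcmono : StrictMono c := by
      refine strictMono_nat_of_lt_succ fun n => ?_
      rw [hcsucc, Ordinal.add_one_eq_succ]
      exact (le_max_right _ _).trans_lt (Order.lt_succ _)
    have hsL : (⨆ n, c n) < κ.ord := by
      refine Ordinal.iSup_lt_ord_lift ?_ hclt
      rw [Cardinal.mk_nat, Cardinal.lift_aleph0, hreg.cof_eq]
      exact hunc
    have hcs : ∀ n, c n < ⨆ n, c n := by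
      intro n
      exact (hcmono (Nat.lt_succ_self n)).trans_le (Ordinal.le_iSup c (n+1))
    have hslim : Order.IsSuccLimit (⨆ n, c n) := by
      refine Ordinal.isSuccLimit_iff.2 ⟨?_, Order.isSuccPrelimit_iff_succ_lt.2 ?_⟩
      · intro h0
        exact absurd (h0 ▸ hcs 0) not_lt_zero
      · intro a ha
        obtain ⟨n, hn⟩ := Ordinal.lt_iSup_iff.1 ha
        exact (Order.succ_le_of_lt hn).trans_lt (hcs n)
    have hgs := hglt _ hslim hsL
    obtain ⟨n, hn⟩ := Ordinal.lt_iSup_iff.1 hgs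
    have hHs : H (c n) ≤ ⨆ n, c n := by
      refine le_of_lt ?_
      refine lt_of_lt_of_le ?_ (Ordinal.le_iSup c (n+1))
      rw [hcsucc, Ordinal.add_one_eq_succ]
      exact (le_max_left _ _).trans_lt (Order.lt_succ _)
    have := hHprop (c n) (hclt n) _ hslim hsL hHs
    exact absurd hn.le (not_le.2 this)
  obtain ⟨γ, hγL, hγunb⟩ := fodor
  -- Step 3: the isolated point w = γ + 1
  have hsγ : Order.succ γ < κ.ord := hLlim.succ_lt hγL
  have hssγ : Order.succ (Order.succ γ) < κ.ord := hLlim.succ_lt hsγ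
  have hγo : γ < o := hγL.trans hLo
  have hsγo : Order.succ γ < o := hsγ.trans hLo
  have hssγo : Order.succ (Order.succ γ) < o := hssγ.trans hLo
  have hsingleton : ({pt (Order.succ γ)} : Set o.ToType) =
      Ioo (pt γ) (pt (Order.succ (Order.succ γ))) := by
    ext y
    simp only [mem_singleton_iff, mem_Ioo, hιmono (pt γ) y, hιmono y _, hptι hγo, hptι hssγo,
      Order.lt_succ_iff]
    constructor
    · rintro rfl
      rw [hptι hsγo]
      exact ⟨Order.lt_succ _, le_rfl⟩
    · rintro ⟨h1, h2⟩
      apply hιinj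
      rw [hptι hsγo]
      exact le_antisymm h2 (Order.succ_le_of_lt h1)
  have hwopen : IsOpen ({pt (Order.succ γ)} : Set o.ToType) := hsingleton ▸ isOpen_Ioo
  obtain ⟨W, hWB, hwW, hWsub⟩ := hB.exists_subset_of_mem_open (mem_singleton _) hwopen
  -- the collection of supersets
  set Sset : Set o.ToType := {x | Order.IsSuccLimit (ι x) ∧ ι x < κ.ord ∧ Order.succ γ ≤ ι x ∧
    g (ι x) ≤ γ} with hSset
  have hWU : ∀ x ∈ Sset, W ⊆ U (ι x) := by
    rintro x ⟨hxlim, hxL, hxγ, hxg⟩ z hz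
    have hzw : z = pt (Order.succ γ) := hWsub hz
    subst hzw
    refine hUmem (ι x) hxlim hxL _ ?_ ?_
    · rw [hptι hsγo]
      exact hxg.trans_lt (Order.lt_succ _)
    · rw [hptι hsγo]
      exact hxγ
  have hmk : #↥Sset ≤ #{V ∈ B | W ⊆ V} := by
    refine Cardinal.mk_le_of_injective
      (f := fun x : ↥Sset => (⟨U (ι x.1), hUB (ι x.1) x.2.1 x.2.2.1, hWU x.1 x.2⟩ :
        ↥{V ∈ B | W ⊆ V})) ?_
    rintro ⟨x, hx⟩ ⟨x', hx'⟩ hEq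
    have hUU : U (ι x) = U (ι x') := congrArg Subtype.val hEq
    have hmm : ∀ a b : o.ToType, a ∈ Sset → b ∈ Sset → U (ι a) = U (ι b) → ι a ≤ ι b := by
      rintro a b ⟨halim, haL, -, -⟩ ⟨hblim, hbL, -, -⟩ hab
      have hmem : pt (ι a) ∈ U (ι a) := by
        refine hUmem (ι a) halim haL _ ?_ ?_
        · rw [hptι (haL.trans hLo)]
          exact hglt (ι a) halim haL
        · rw [hptι (haL.trans hLo)]
      rw [hab] at hmem
      have := hUsub (ι b) hblim hbL _ hmem
      rwa [hptι (haL.trans hLo)] at this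
    have : ι x = ι x' := le_antisymm (hmm x x' hx hx' hUU) (hmm x' x hx' hx hUU.symm)
    exact Subtype.ext (hιinj this)
  have hcard : #↥Sset < κ := hmk.trans_lt (hop W hWB)
  -- Step 4: Sset is unbounded, contradiction with regularity
  have hbound : (⨆ x : ↥Sset, ι x.1) < κ.ord := by
    refine Ordinal.iSup_lt_ord ?_ fun x => x.2.2.1
    rwa [hreg.cof_eq]
  have hβ : max (Order.succ (⨆ x : ↥Sset, ι x.1)) (Order.succ γ) < κ.ord :=
    max_lt (hLlim.succ_lt hbound) hsγ
  obtain ⟨α, hαlim, hαL, hαβ, hαg⟩ := hγunb _ hβ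
  have hαo : α < o := hαL.trans hLo
  have hxS : pt α ∈ Sset := by
    refine ⟨?_, ?_, ?_, ?_⟩ <;> rw [hptι hαo]
    · exact hαlim
    · exact hαL
    · exact (le_max_right _ _).trans hαβ
    · exact hαg
  have hle : ι (pt α) ≤ ⨆ x : ↥Sset, ι x.1 := Ordinal.le_iSup (fun x : ↥Sset => ι x.1) ⟨pt α, hxS⟩
  rw [hptι hαo] at hle
  have : Order.succ (⨆ x : ↥Sset, ι x.1) ≤ α := (le_max_left _ _).trans hαβ
  exact absurd (hle.trans_lt (Order.lt_succ _)) (not_lt.2 this)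

/-- If `κ` is a regular uncountable cardinal, then the ordinal space `κ + 1`
has Noetherian type `κ⁺`: it has a `κ⁺`-op-like base but no `κ`-op-like base. -/
theorem statement11 (κ : Cardinal.{u}) (hreg : κ.IsRegular) (hunc : ℵ₀ < κ) :
    NoetherianType (Order.succ κ.ord).ToType = Order.succ κ ∧
    (∃ B : Set (Set (Order.succ κ.ord).ToType),
      IsTopologicalBasis B ∧ OpLike (Order.succ κ) B) ∧
    ¬ ∃ B : Set (Set (Order.succ κ.ord).ToType), IsTopologicalBasis B ∧ OpLike κ B := by
  classical
  have hcardX : #((Order.succ κ.ord).ToType) = κ := by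
    rw [Cardinal.mk_toType, Ordinal.card_succ, Cardinal.card_ord]
    exact Cardinal.add_one_of_aleph0_le hreg.aleph0_le
  haveI : Infinite ((Order.succ κ.ord).ToType) := by
    rw [Cardinal.infinite_iff, hcardX]
    exact hreg.aleph0_le
  obtain ⟨B, hB, hBle⟩ := basisSmall ((Order.succ κ.ord).ToType)
  rw [hcardX] at hBle
  have hOpSucc : OpLike (Order.succ κ) B := by
    intro U hU
    exact lt_of_le_of_lt ((Cardinal.mk_le_mk_of_subset (Set.sep_subset _ _)).trans hBle)
      (Order.lt_succ κ)
  have hNeg : ¬ ∃ B : Set (Set (Order.succ κ.ord).ToType),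
      IsTopologicalBasis B ∧ OpLike κ B := by
    rintro ⟨B', hB', hop'⟩
    exact noOplike κ hreg hunc _ rfl B' hB' hop'
  have hmem : Order.succ κ ∈ {μ : Cardinal.{u} | ℵ₀ ≤ μ ∧
      ∃ B : Set (Set (Order.succ κ.ord).ToType), IsTopologicalBasis B ∧ OpLike μ B} :=
    ⟨hreg.aleph0_le.trans (Order.le_succ κ), B, hB, hOpSucc⟩
  refine ⟨?_, ⟨B, hB, hOpSucc⟩, hNeg⟩
  refine le_antisymm (csInf_le' hmem) ?_
  refine le_csInf ⟨_, hmem⟩ ?_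
  rintro μ ⟨hμinf, B', hB', hop'⟩
  by_contra hlt
  push_neg at hlt
  have hμκ : μ ≤ κ := Order.lt_succ_iff.1 hlt
  exact hNeg ⟨B', hB', fun U hU => (hop' U hU).trans_le hμκ⟩
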